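/- Let 𝒮=(S,𝒞,rk) be a finitary semimatroid with poset of flats ℒ. Then ℒ is a finitary geometric semilattice; precisely: (i) ℒ is a chain-finite meet-semilattice, the meet of two flats X,Y being cl(X∩Y), and ℒ is ranked with rank function given by rk; (ii) there exists N∈ℕ such that every interval of ℒ is a finite geometric lattice (a finite, atomic, semimodular lattice) with at most N atoms; (iii) for every independent set A of atoms of ℒ (i.e., ⋁A exists and rk(⋁A)=|A|) and every x∈ℒ with rk(x)<rk(⋁A), there is an atom a∈A with a≰x such that the join x∨a exists in ℒ. -/

import Mathlib

open scoped Classical Pointwise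


/-- A finitary semimatroid on the ground set `S`: a nonempty, finite-dimensional
simplicial complex `C` of finite subsets of `S` (containing all singletons), together
with a rank function satisfying (R1)-(R3), (CR1), (CR2). -/
structure FinSemimatroid (S : Type*) [DecidableEq S] where
  C : Set (Finset S)
  rk : Finset S → ℕ
  nonempty : C.Nonempty
  downClosed : ∀ ⦃X Y : Finset S⦄, X ∈ C → Y ⊆ X → Y ∈ C
  singleton_mem : ∀ x : S, ({x} : Finset S) ∈ C
  finDim : ∃ d : ℕ, ∀ X ∈ C, X.card ≤ d
  r1 : ∀ X ∈ C, rk X ≤ X.card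
  r2 : ∀ ⦃X Y : Finset S⦄, X ∈ C → Y ∈ C → X ⊆ Y → rk X ≤ rk Y
  r3 : ∀ ⦃X Y : Finset S⦄, X ∈ C → Y ∈ C → X ∪ Y ∈ C →
    rk (X ∪ Y) + rk (X ∩ Y) ≤ rk X + rk Y
  cr1 : ∀ ⦃X Y : Finset S⦄, X ∈ C → Y ∈ C → rk X = rk (X ∩ Y) → X ∪ Y ∈ C
  cr2 : ∀ ⦃X Y : Finset S⦄, X ∈ C → Y ∈ C → rk X < rk Y →
    ∃ y ∈ Y, y ∉ X ∧ insert y X ∈ C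

namespace FinSemimatroid

variable {S : Type*} [DecidableEq S]

/-- The closure of a central set. -/
def cl (M : FinSemimatroid S) (X : Finset S) : Set S :=
  {y : S | insert y X ∈ M.C ∧ M.rk (insert y X) = M.rk X}

/-- A flat is a closed central set. -/
def IsFlat (M : FinSemimatroid S) (X : Finset S) : Prop :=
  X ∈ M.C ∧ M.cl X = (X : Set S)

/-- The poset of flats, ordered by inclusion. -/
abbrev Flats (M : FinSemimatroid S) : Type _ := {X : Finset S // M.IsFlat X}

/-- A simple finitary semimatroid. -/
def Simple (M : FinSemimatroid S) : Prop :=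
  (∀ x : S, M.rk {x} = 1) ∧
    ∀ x y : S, x ≠ y → ({x, y} : Finset S) ∈ M.C → M.rk {x, y} = 2

end FinSemimatroid

/-- A poset is chain-finite if all its chains are finite. -/
def ChainFinite (L : Type*) [PartialOrder L] : Prop :=
  ∀ c : Set L, IsChain (· ≤ ·) c → c.Finite

/-- An atom of a bounded-below poset: an element covering the minimum. -/
def PosetAtom {L : Type*} [PartialOrder L] (a : L) : Prop :=
  ∃ bot : L, IsBot bot ∧ bot ⋖ a

/-- `L` (with rank function `rk`) is a finite geometric lattice (finite, bounded below,
a lattice, ranked by `rk`, atomic and semimodular) with at most `N` atoms. -/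
def IsFinGeomLatticeAtMost (L : Type*) [PartialOrder L] (rk : L → ℕ) (N : ℕ) : Prop :=
  Finite L ∧
    ∃ bot : L, IsBot bot ∧
      (∀ x y : L, ∃ m : L, IsGLB {x, y} m) ∧
      (∀ x y : L, ∃ j : L, IsLUB {x, y} j) ∧
      (∀ x y : L, x ⋖ y → rk y = rk x + 1) ∧
      (∀ x : L, ∃ A : Set L, (∀ a ∈ A, bot ⋖ a) ∧ IsLUB A x) ∧
      (∀ x y m j : L, IsGLB {x, y} m → IsLUB {x, y} j → rk j + rk m ≤ rk x + rk y) ∧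
      Nat.card {a : L | bot ⋖ a} ≤ N

namespace FinSemimatroid

variable {S : Type*} [DecidableEq S]

variable {M : FinSemimatroid S} {X Y Z F : Finset S} {y : S}

lemma empty_mem : (∅ : Finset S) ∈ M.C := by
  obtain ⟨X, hX⟩ := M.nonempty
  exact M.downClosed hX (Finset.empty_subset X)

lemma rk_empty : M.rk ∅ = 0 := Nat.le_zero.mp (M.r1 ∅ empty_mem)

lemma rk_insert_le (hX : X ∈ M.C) (h : insert y X ∈ M.C) :
    M.rk (insert y X) ≤ M.rk X + 1 := by
  have h3 := M.r3 (M.singleton_mem y) hX (by rwa [← Finset.insert_eq])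
  rw [← Finset.insert_eq] at h3
  have := M.r1 {y} (M.singleton_mem y)
  simp only [Finset.card_singleton] at this
  omega

lemma subset_cl (hX : X ∈ M.C) : (↑X : Set S) ⊆ M.cl X := by
  intro x hx
  have : insert x X = X := Finset.insert_eq_self.mpr hx
  show insert x X ∈ M.C ∧ M.rk (insert x X) = M.rk X
  rw [this]; exact ⟨hX, rfl⟩

lemma rk_insert_of_not_mem_cl (hX : X ∈ M.C) (h : insert y X ∈ M.C) (hy : y ∉ M.cl X) :
    M.rk (insert y X) = M.rk X + 1 := by
  have hle := rk_insert_le hX h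
  have hlt : M.rk X < M.rk (insert y X) := by
    rcases lt_or_eq_of_le (M.r2 hX h (Finset.subset_insert y X)) with h' | h'
    · exact h'
    · exact absurd (⟨h, h'.symm⟩ : y ∈ M.cl X) hy
  omega

lemma union_cl (hX : X ∈ M.C) (hF : (↑F : Set S) ⊆ M.cl X) :
    X ∪ F ∈ M.C ∧ M.rk (X ∪ F) = M.rk X := by
  induction F using Finset.induction_on with
  | empty => exact ⟨by simpa using hX, by simp⟩
  | @insert a F ha ih =>
    have hsub : (↑F : Set S) ⊆ M.cl X := by
      refine subset_trans ?_ hF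
      norm_cast; exact Finset.subset_insert a F
    obtain ⟨hC, hrk⟩ := ih hsub
    have hacl : a ∈ M.cl X := hF (by simp)
    have hA : insert a X ∈ M.C := hacl.1
    have hrkA : M.rk (insert a X) = M.rk X := hacl.2
    have hinter : M.rk (insert a X) = M.rk (insert a X ∩ (X ∪ F)) := by
      have h1 : X ⊆ insert a X ∩ (X ∪ F) :=
        Finset.subset_inter (Finset.subset_insert a X) Finset.subset_union_left
      have h2 : insert a X ∩ (X ∪ F) ⊆ insert a X := Finset.inter_subset_left
      have hIC : insert a X ∩ (X ∪ F) ∈ M.C := M.downClosed hA h2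
      have := M.r2 hX hIC h1
      have := M.r2 hIC hA h2
      omega
    have hunion : insert a X ∪ (X ∪ F) ∈ M.C := M.cr1 hA hC hinter
    have heq : insert a X ∪ (X ∪ F) = X ∪ insert a F := by
      ext x; simp only [Finset.mem_union, Finset.mem_insert]; tauto
    rw [heq] at hunion
    refine ⟨hunion, le_antisymm ?_ ?_⟩
    · have hu' : insert a X ∪ (X ∪ F) ∈ M.C := by rw [heq]; exact hunion
      have h3 := M.r3 hA hC hu'
      rw [heq] at h3
      have hi : X ⊆ insert a X ∩ (X ∪ F) :=
        Finset.subset_inter (Finset.subset_insert a X) Finset.subset_union_left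
      have := M.r2 hX (M.downClosed hA Finset.inter_subset_left) hi
      omega
    · exact M.r2 hX hunion Finset.subset_union_left

lemma cl_finite (hX : X ∈ M.C) : (M.cl X).Finite := by
  obtain ⟨d, hd⟩ := M.finDim
  by_contra hinf
  obtain ⟨F, hFsub, hFcard⟩ :=
    (Set.Infinite.exists_subset_card_eq hinf (d + 1))
  obtain ⟨hC, -⟩ := union_cl hX hFsub
  have : F ∈ M.C := M.downClosed hC Finset.subset_union_right
  have := hd F this
  omega

lemma cl_mono (hX : X ∈ M.C) (hY : Y ∈ M.C) (hXY : X ⊆ Y) : M.cl X ⊆ M.cl Y := by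
  intro z hz
  obtain ⟨hA, hrkA⟩ := hz
  have hinter : M.rk (insert z X) = M.rk (insert z X ∩ Y) := by
    have h1 : X ⊆ insert z X ∩ Y := Finset.subset_inter (Finset.subset_insert z X) hXY
    have h2 : insert z X ∩ Y ⊆ insert z X := Finset.inter_subset_left
    have hIC : insert z X ∩ Y ∈ M.C := M.downClosed hA h2
    have := M.r2 hX hIC h1
    have := M.r2 hIC hA h2
    omega
  have hunion : insert z X ∪ Y ∈ M.C := M.cr1 hA hY hinter
  have heq : insert z X ∪ Y = insert z Y := by
    ext x; simp only [Finset.mem_union, Finset.mem_insert]; tauto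
  rw [heq] at hunion
  refine ⟨hunion, le_antisymm ?_ (M.r2 hY hunion (Finset.subset_insert z Y))⟩
  have hu' : insert z X ∪ Y ∈ M.C := by rw [heq]; exact hunion
  have h3 := M.r3 hA hY hu'
  rw [heq] at h3
  have hi : X ⊆ insert z X ∩ Y := Finset.subset_inter (Finset.subset_insert z X) hXY
  have := M.r2 hX (M.downClosed hA Finset.inter_subset_left) hi
  omega

lemma exists_closure (hX : X ∈ M.C) : ∃ Z : Finset S, (↑Z : Set S) = M.cl X ∧
    M.IsFlat Z ∧ X ⊆ Z ∧ M.rk Z = M.rk X := by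
  classical
  set Z := (cl_finite hX).toFinset with hZdef
  have hZ : (↑Z : Set S) = M.cl X := Set.Finite.coe_toFinset _
  have hXZ : X ⊆ Z := by
    rw [← Finset.coe_subset, hZ]; exact subset_cl hX
  have hUZ : X ∪ Z = Z := Finset.union_eq_right.mpr hXZ
  obtain ⟨hZC, hZrk⟩ := union_cl hX (F := Z) (hZ ▸ subset_rfl)
  rw [hUZ] at hZC hZrk
  refine ⟨Z, hZ, ⟨hZC, ?_⟩, hXZ, hZrk⟩
  refine Set.Subset.antisymm ?_ (hZ ▸ subset_cl hZC)
  intro y hy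
  obtain ⟨hyC, hyrk⟩ := hy
  have hsub : insert y X ⊆ insert y Z := Finset.insert_subset_insert y hXZ
  have hyXC : insert y X ∈ M.C := M.downClosed hyC hsub
  have h1 : M.rk (insert y X) ≤ M.rk X := by
    have := M.r2 hyXC hyC hsub
    omega
  have h2 : M.rk X ≤ M.rk (insert y X) := M.r2 hX hyXC (Finset.subset_insert y X)
  rw [hZ]
  exact ⟨hyXC, le_antisymm h1 h2⟩

lemma cl_subset_flat (hX : X ∈ M.C) (hF : M.IsFlat F) (h : X ⊆ F) : M.cl X ⊆ ↑F := by
  have := cl_mono hX hF.1 h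
  rwa [hF.2] at this

lemma rk_lt_of_ssubset (hX : M.IsFlat X) (hY : M.IsFlat Y) (h : X ⊂ Y) :
    M.rk X < M.rk Y := by
  rcases lt_or_eq_of_le (M.r2 hX.1 hY.1 h.subset) with h' | h'
  · exact h'
  exfalso
  obtain ⟨y, hyY, hyX⟩ := Finset.exists_of_ssubset h
  have hins : insert y X ⊆ Y := Finset.insert_subset hyY h.subset
  have hinsC : insert y X ∈ M.C := M.downClosed hY.1 hins
  have h1 : M.rk (insert y X) ≤ M.rk X := h' ▸ M.r2 hinsC hY.1 hins
  have h2 : M.rk X ≤ M.rk (insert y X) := M.r2 hX.1 hinsC (Finset.subset_insert y X)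
  have : y ∈ M.cl X := ⟨hinsC, le_antisymm h1 h2⟩
  rw [hX.2] at this
  exact hyX this

lemma covBy_rk {X Y : M.Flats} (h : X ⋖ Y) : M.rk Y.1 = M.rk X.1 + 1 := by
  have hlt : X.1 ⊂ Y.1 := h.1
  have hr := rk_lt_of_ssubset X.2 Y.2 hlt
  by_contra hne
  obtain ⟨y, hyY, hyX, hyC⟩ := M.cr2 X.2.1 Y.2.1 hr
  obtain ⟨Z, hZcl, hZflat, hZsub, hZrk⟩ := exists_closure hyC
  have hZY : Z ⊆ Y.1 := by
    rw [← Finset.coe_subset, hZcl]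
    exact cl_subset_flat hyC Y.2 (Finset.insert_subset hyY hlt.subset)
  have hXZ : X.1 ⊂ Z := by
    refine Finset.ssubset_iff_of_subset
      ((Finset.subset_insert y X.1).trans hZsub) |>.mpr ?_
    exact ⟨y, hZsub (Finset.mem_insert_self y X.1), hyX⟩
  have hycl : y ∉ M.cl X.1 := by rw [X.2.2]; exact_mod_cast hyX
  have hrkZ : M.rk Z = M.rk X.1 + 1 := by
    rw [hZrk]; exact rk_insert_of_not_mem_cl X.2.1 hyC hycl
  have hZneY : Z ≠ Y.1 := fun he => hne (by rw [← he, hrkZ])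
  exact h.2 (show X < ⟨Z, hZflat⟩ from hXZ)
    (show (⟨Z, hZflat⟩ : M.Flats) < Y from (Finset.ssubset_iff_subset_ne.mpr ⟨hZY, hZneY⟩ : Z ⊂ Y.1))

lemma covBy_of_rk {X Y : M.Flats} (h : X < Y) (hr : M.rk Y.1 = M.rk X.1 + 1) :
    X ⋖ Y := by
  refine ⟨h, fun Z h1 h2 => ?_⟩
  have r1 := rk_lt_of_ssubset X.2 Z.2 h1
  have r2 := rk_lt_of_ssubset Z.2 Y.2 h2
  omega

lemma exists_bot : ∃ B : M.Flats, IsBot B ∧ M.rk B.1 = 0 ∧ (↑B.1 : Set S) = M.cl ∅ := by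
  obtain ⟨Z, hZcl, hZflat, -, hZrk⟩ := exists_closure (M := M) empty_mem
  refine ⟨⟨Z, hZflat⟩, ?_, by rw [hZrk, rk_empty], hZcl⟩
  intro F
  show Z ⊆ F.1
  rw [← Finset.coe_subset, hZcl]
  exact cl_subset_flat empty_mem F.2 (Finset.empty_subset _)

lemma chainFinite : ChainFinite M.Flats := by
  intro c hc
  obtain ⟨d, hd⟩ := M.finDim
  have hinj : Set.InjOn (fun X : M.Flats => M.rk X.1) c := by
    intro x hx y hy hxy
    simp only at hxy
    by_contra hne
    rcases hc hx hy hne with h | h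
    · have := rk_lt_of_ssubset x.2 y.2
        (Finset.ssubset_iff_subset_ne.mpr ⟨h, fun he => hne (Subtype.ext he)⟩)
      omega
    · have := rk_lt_of_ssubset y.2 x.2
        (Finset.ssubset_iff_subset_ne.mpr ⟨h, fun he => hne (Subtype.ext he).symm⟩)
      omega
  refine Set.Finite.of_finite_image ?_ hinj
  refine Set.Finite.subset (Set.finite_Iic d) ?_
  rintro n ⟨x, hx, rfl⟩
  exact le_trans (M.r1 x.1 x.2.1) (hd x.1 x.2.1)

lemma exists_glb (X Y : M.Flats) : ∃ Z : M.Flats,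
    (↑Z.1 : Set S) = M.cl (X.1 ∩ Y.1) ∧ IsGLB {X, Y} Z := by
  have hI : X.1 ∩ Y.1 ∈ M.C := M.downClosed X.2.1 Finset.inter_subset_left
  obtain ⟨Z, hZcl, hZflat, hZsub, hZrk⟩ := exists_closure hI
  refine ⟨⟨Z, hZflat⟩, hZcl, ?_, ?_⟩
  · intro w hw
    simp only [Set.mem_insert_iff, Set.mem_singleton_iff] at hw
    rcases hw with rfl | rfl
    · show Z ⊆ w.1
      rw [← Finset.coe_subset, hZcl]
      exact cl_subset_flat hI w.2 Finset.inter_subset_left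
    · show Z ⊆ w.1
      rw [← Finset.coe_subset, hZcl]
      exact cl_subset_flat hI w.2 Finset.inter_subset_right
  · intro u hu
    have h1 : u ≤ X := hu (Set.mem_insert _ _)
    have h2 : u ≤ Y := hu (Set.mem_insert_of_mem _ rfl)
    exact ((Finset.subset_inter (h1 : u.1 ⊆ X.1) (h2 : u.1 ⊆ Y.1)).trans hZsub : u.1 ⊆ Z)

lemma interval_geom (d : ℕ) (hd : ∀ X ∈ M.C, X.card ≤ d) (a b : M.Flats) (hab : a ≤ b) :
    IsFinGeomLatticeAtMost ↥(Set.Icc a b) (fun z => M.rk z.1.1) (2 ^ d) := by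
  classical
  have hf : ∀ z : ↥(Set.Icc a b), z.1.1 ∈ b.1.powerset :=
    fun z => Finset.mem_powerset.mpr z.2.2
  have hfinj : Function.Injective (fun z : ↥(Set.Icc a b) => (⟨z.1.1, hf z⟩ : ↥(b.1.powerset))) := by
    intro z w h
    simp only [Subtype.mk.injEq] at h
    exact Subtype.ext (Subtype.ext h)
  have hfin : Finite ↥(Set.Icc a b) := Finite.of_injective _ hfinj
  have hba : a ∈ Set.Icc a b := Set.mem_Icc.mpr ⟨le_refl a, hab⟩
  set ba : ↥(Set.Icc a b) := ⟨a, hba⟩ with hbadef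
  have hbot : IsBot ba := fun z => z.2.1
  have key : ∀ x y : ↥(Set.Icc a b), ∃ m j : ↥(Set.Icc a b),
      IsGLB {x, y} m ∧ IsLUB {x, y} j ∧
      M.rk m.1.1 = M.rk (x.1.1 ∩ y.1.1) ∧ M.rk j.1.1 = M.rk (x.1.1 ∪ y.1.1) := by
    intro x y
    have hI : x.1.1 ∩ y.1.1 ∈ M.C := M.downClosed x.1.2.1 Finset.inter_subset_left
    obtain ⟨Zm, hZmcl, hZmflat, hZmsub, hZmrk⟩ := exists_closure hI
    have hZmx : Zm ⊆ x.1.1 := by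
      rw [← Finset.coe_subset, hZmcl]
      exact cl_subset_flat hI x.1.2 Finset.inter_subset_left
    have hZmy : Zm ⊆ y.1.1 := by
      rw [← Finset.coe_subset, hZmcl]
      exact cl_subset_flat hI y.1.2 Finset.inter_subset_right
    have hZma : a.1 ⊆ Zm :=
      (Finset.subset_inter (x.2.1 : a.1 ⊆ x.1.1) (y.2.1 : a.1 ⊆ y.1.1)).trans hZmsub
    have hZmb : Zm ⊆ b.1 := hZmx.trans (x.2.2 : x.1.1 ⊆ b.1)
    have hU : x.1.1 ∪ y.1.1 ∈ M.C :=
      M.downClosed b.2.1 (Finset.union_subset (x.2.2 : x.1.1 ⊆ b.1) (y.2.2 : y.1.1 ⊆ b.1))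
    obtain ⟨Zj, hZjcl, hZjflat, hZjsub, hZjrk⟩ := exists_closure hU
    have hZjb : Zj ⊆ b.1 := by
      rw [← Finset.coe_subset, hZjcl]
      exact cl_subset_flat hU b.2
        (Finset.union_subset (x.2.2 : x.1.1 ⊆ b.1) (y.2.2 : y.1.1 ⊆ b.1))
    have hax : a.1 ⊆ x.1.1 := x.2.1
    have hZja : a.1 ⊆ Zj := (hax.trans Finset.subset_union_left).trans hZjsub
    refine ⟨⟨⟨Zm, hZmflat⟩, Set.mem_Icc.mpr ⟨hZma, hZmb⟩⟩,
      ⟨⟨Zj, hZjflat⟩, Set.mem_Icc.mpr ⟨hZja, hZjb⟩⟩, ⟨?_, ?_⟩, ⟨?_, ?_⟩, hZmrk, hZjrk⟩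
    · intro w hw
      simp only [Set.mem_insert_iff, Set.mem_singleton_iff] at hw
      rcases hw with rfl | rfl
      · exact hZmx
      · exact hZmy
    · intro u hu
      have h1 : u ≤ x := hu (Set.mem_insert _ _)
      have h2 : u ≤ y := hu (Set.mem_insert_of_mem _ rfl)
      exact (Finset.subset_inter (h1 : u.1.1 ⊆ x.1.1) (h2 : u.1.1 ⊆ y.1.1)).trans hZmsub
    · intro w hw
      simp only [Set.mem_insert_iff, Set.mem_singleton_iff] at hw
      rcases hw with rfl | rfl
      · exact Finset.subset_union_left.trans hZjsub
      · exact Finset.subset_union_right.trans hZjsub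
    · intro u hu
      have h1 : x ≤ u := hu (Set.mem_insert _ _)
      have h2 : y ≤ u := hu (Set.mem_insert_of_mem _ rfl)
      show Zj ⊆ u.1.1
      rw [← Finset.coe_subset, hZjcl]
      exact cl_subset_flat hU u.1.2
        (Finset.union_subset (h1 : x.1.1 ⊆ u.1.1) (h2 : y.1.1 ⊆ u.1.1))
  have covdown : ∀ x y : ↥(Set.Icc a b), x ⋖ y → x.1 ⋖ y.1 := by
    intro x y h
    refine ⟨Subtype.coe_lt_coe.mpr h.1, fun Z h1 h2 => ?_⟩
    have hZmem : Z ∈ Set.Icc a b :=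
      Set.mem_Icc.mpr ⟨le_trans x.2.1 (le_of_lt h1), le_trans (le_of_lt h2) y.2.2⟩
    exact h.2 (Subtype.coe_lt_coe.mp (show x.1 < (⟨Z, hZmem⟩ : ↥(Set.Icc a b)).1 from h1))
      (Subtype.coe_lt_coe.mp (show (⟨Z, hZmem⟩ : ↥(Set.Icc a b)).1 < y.1 from h2))
  have covup : ∀ x y : ↥(Set.Icc a b), x.1 ⋖ y.1 → x ⋖ y := by
    intro x y h
    exact ⟨Subtype.coe_lt_coe.mp h.1,
      fun c hc1 hc2 => h.2 (Subtype.coe_lt_coe.mpr hc1) (Subtype.coe_lt_coe.mpr hc2)⟩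
  refine ⟨hfin, ba, hbot, fun x y => ⟨(key x y).choose, (key x y).choose_spec.choose_spec.1⟩,
    fun x y => ⟨(key x y).choose_spec.choose, (key x y).choose_spec.choose_spec.2.1⟩,
    fun x y h => covBy_rk (covdown x y h), ?_, ?_, ?_⟩
  · -- atomic
    intro x
    refine ⟨{z | ba ⋖ z ∧ z ≤ x}, fun z hz => hz.1, fun z hz => hz.2, ?_⟩
    intro u hu
    show x.1.1 ⊆ u.1.1
    intro s hs
    by_cases hsa : s ∈ a.1
    · exact (u.2.1 : a.1 ⊆ u.1.1) hsa
    · have hsub : insert s a.1 ⊆ x.1.1 := Finset.insert_subset hs (x.2.1 : a.1 ⊆ x.1.1)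
      have hins : insert s a.1 ∈ M.C := M.downClosed x.1.2.1 hsub
      obtain ⟨Zc, hZccl, hZcflat, hZcsub, hZcrk⟩ := exists_closure hins
      have hZcx : Zc ⊆ x.1.1 := by
        rw [← Finset.coe_subset, hZccl]
        exact cl_subset_flat hins x.1.2 hsub
      have hsZc : s ∈ Zc := hZcsub (Finset.mem_insert_self s a.1)
      have haZc : a.1 ⊂ Zc :=
        Finset.ssubset_iff_of_subset ((Finset.subset_insert s a.1).trans hZcsub) |>.mpr
          ⟨s, hsZc, hsa⟩
      have hscl : s ∉ M.cl a.1 := by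
        rw [a.2.2]; exact_mod_cast hsa
      have hrkZc : M.rk Zc = M.rk a.1 + 1 := by
        rw [hZcrk]; exact rk_insert_of_not_mem_cl a.2.1 hins hscl
      have hZmem : (⟨Zc, hZcflat⟩ : M.Flats) ∈ Set.Icc a b :=
        Set.mem_Icc.mpr ⟨haZc.subset, hZcx.trans (x.2.2 : x.1.1 ⊆ b.1)⟩
      have hcov : ba ⋖ (⟨⟨Zc, hZcflat⟩, hZmem⟩ : ↥(Set.Icc a b)) :=
        covup _ _ (covBy_of_rk haZc hrkZc)
      have hzA : (⟨⟨Zc, hZcflat⟩, hZmem⟩ : ↥(Set.Icc a b)) ∈ {z | ba ⋖ z ∧ z ≤ x} :=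
        ⟨hcov, hZcx⟩
      exact (hu hzA : Zc ⊆ u.1.1) hsZc
  · -- semimodular
    intro x y m j hm hj
    obtain ⟨m', j', hm', hj', hrm, hrj⟩ := key x y
    have hme : m = m' := hm.unique hm'
    have hje : j = j' := hj.unique hj'
    subst hme hje
    simp only
    rw [hrm, hrj]
    have hU : x.1.1 ∪ y.1.1 ∈ M.C :=
      M.downClosed b.2.1 (Finset.union_subset (x.2.2 : x.1.1 ⊆ b.1) (y.2.2 : y.1.1 ⊆ b.1))
    exact M.r3 x.1.2.1 y.1.2.1 hU
  · -- card
    calc Nat.card {z : ↥(Set.Icc a b) | ba ⋖ z}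
        ≤ Nat.card ↥(Set.Icc a b) :=
          Nat.card_le_card_of_injective Subtype.val Subtype.val_injective
      _ ≤ Nat.card ↥(b.1.powerset) := Nat.card_le_card_of_injective _ hfinj
      _ = (b.1.powerset).card := Nat.card_eq_finsetCard _
      _ = 2 ^ b.1.card := Finset.card_powerset _
      _ ≤ 2 ^ d := Nat.pow_le_pow_right (by norm_num) (hd b.1 b.2.1)

lemma rk_singleton_eq_one {B : M.Flats} (hB : (↑B.1 : Set S) = M.cl ∅) {y : S}
    (hy : y ∉ B.1) : M.rk {y} = 1 := by
  have h1 : M.rk {y} ≤ 1 := by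
    have := M.r1 {y} (M.singleton_mem y)
    simpa using this
  rcases Nat.lt_or_ge (M.rk {y}) 1 with h | h
  · exfalso
    apply hy
    have he : insert y (∅ : Finset S) = {y} := by simp
    have : y ∈ M.cl ∅ := by
      refine ⟨by rw [he]; exact M.singleton_mem y, ?_⟩
      rw [he, rk_empty]
      omega
    rw [← hB] at this
    exact_mod_cast this
  · omega

lemma g4 (A : Finset M.Flats) (jA : M.Flats)
    (hatoms : ∀ a ∈ A, PosetAtom a) (hlub : IsLUB ↑A jA)
    (x : M.Flats) (hx : M.rk x.1 < M.rk jA.1) :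
    ∃ a ∈ A, ¬a ≤ x ∧ ∃ j : M.Flats, IsLUB {x, a} j := by
  classical
  obtain ⟨B, hB, hBrk, hBcl⟩ := exists_bot (M := M)
  have hpick : ∀ a : {a // a ∈ A}, ∃ y : S, y ∈ a.1.1 ∧ y ∉ B.1 := by
    intro a
    obtain ⟨bot', hbot', hcov⟩ := hatoms a.1 a.2
    have hbe : bot' = B := le_antisymm (hbot' B) (hB bot')
    rw [hbe] at hcov
    obtain ⟨y, hy1, hy2⟩ := Finset.exists_of_ssubset (show B.1 ⊂ a.1.1 from hcov.1)
    exact ⟨y, hy1, hy2⟩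
  choose f hf1 hf2 using hpick
  -- each atom equals the closure of its chosen point
  have hacl : ∀ a : {a // a ∈ A}, ∃ Za : Finset S,
      (↑Za : Set S) = M.cl {f a} ∧ Za = a.1.1 := by
    intro a
    obtain ⟨Za, hZacl, hZaflat, hZasub, hZark⟩ := exists_closure (M.singleton_mem (f a))
    refine ⟨Za, hZacl, ?_⟩
    have hZaa : Za ⊆ a.1.1 := by
      rw [← Finset.coe_subset, hZacl]
      exact cl_subset_flat (M.singleton_mem (f a)) a.1.2
        (Finset.singleton_subset_iff.mpr (hf1 a))
    have hrk1 : M.rk Za = 1 := by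
      rw [hZark]; exact rk_singleton_eq_one hBcl (hf2 a)
    have hrka : M.rk a.1.1 = 1 := by
      obtain ⟨bot', hbot', hcov⟩ := hatoms a.1 a.2
      have hbe : bot' = B := le_antisymm (hbot' B) (hB bot')
      rw [hbe] at hcov
      have := covBy_rk hcov
      omega
    by_contra hne
    have := rk_lt_of_ssubset hZaflat a.1.2 (Finset.ssubset_iff_subset_ne.mpr ⟨hZaa, hne⟩)
    omega
  set Y : Finset S := A.attach.image f with hYdef
  have hYsub : Y ⊆ jA.1 := by
    intro y hy
    simp only [hYdef, Finset.mem_image, Finset.mem_attach, true_and] at hy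
    obtain ⟨a, rfl⟩ := hy
    exact (hlub.1 a.2 : a.1.1 ⊆ jA.1) (hf1 a)
  have hYC : Y ∈ M.C := M.downClosed jA.2.1 hYsub
  obtain ⟨CY, hCYcl, hCYflat, hCYsub, hCYrk⟩ := exists_closure hYC
  have hub : (⟨CY, hCYflat⟩ : M.Flats) ∈ upperBounds (↑A : Set M.Flats) := by
    intro w hw
    obtain ⟨Za, hZacl, hZaeq⟩ := hacl ⟨w, hw⟩
    show w.1 ⊆ CY
    rw [← hZaeq, ← Finset.coe_subset, hZacl, hCYcl]
    exact cl_mono (M.singleton_mem _) hYC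
      (Finset.singleton_subset_iff.mpr
        (Finset.mem_image_of_mem f (Finset.mem_attach A ⟨w, hw⟩)))
  have hrkY : M.rk jA.1 ≤ M.rk Y := by
    have h1 : jA ≤ ⟨CY, hCYflat⟩ := hlub.2 hub
    have := M.r2 jA.2.1 hCYflat.1 h1
    omega
  obtain ⟨y, hyY, hyx, hins⟩ := M.cr2 x.2.1 hYC (lt_of_lt_of_le hx hrkY)
  simp only [hYdef, Finset.mem_image, Finset.mem_attach, true_and] at hyY
  obtain ⟨a, rfl⟩ := hyY
  obtain ⟨Za, hZacl, hZaeq⟩ := hacl a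
  obtain ⟨J, hJcl, hJflat, hJsub, hJrk⟩ := exists_closure hins
  refine ⟨a.1, a.2, fun hle => hyx ((hle : a.1.1 ⊆ x.1) (hf1 a)), ⟨J, hJflat⟩, ?_, ?_⟩
  · intro w hw
    simp only [Set.mem_insert_iff, Set.mem_singleton_iff] at hw
    rcases hw with rfl | rfl
    · exact (Finset.subset_insert _ _).trans hJsub
    · show a.1.1 ⊆ J
      rw [← hZaeq, ← Finset.coe_subset, hZacl, hJcl]
      exact cl_mono (M.singleton_mem _) hins
        (Finset.singleton_subset_iff.mpr (Finset.mem_insert_self _ _))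
  · intro u hu
    have h1 : x ≤ u := hu (Set.mem_insert _ _)
    have h2 : a.1 ≤ u := hu (Set.mem_insert_of_mem _ rfl)
    show J ⊆ u.1
    rw [← Finset.coe_subset, hJcl]
    exact cl_subset_flat hins u.2
      (Finset.insert_subset ((h2 : a.1.1 ⊆ u.1) (hf1 a)) h1)

end FinSemimatroid


/-- The poset of flats of a finitary semimatroid is a finitary
geometric semilattice: (i) it is a chain-finite meet-semilattice with meets given by
`cl (X ∩ Y)`, ranked by `rk`; (ii) there is `N` such that every interval is a finite
geometric lattice with at most `N` atoms; (iii) the exchange property (G4) holds. -/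
theorem flats_isFinitaryGeometricSemilattice
    {S : Type*} [DecidableEq S] (M : FinSemimatroid S) :
    ChainFinite M.Flats ∧
    (∀ X Y : M.Flats, ∃ Z : M.Flats,
      (↑Z.1 : Set S) = M.cl (X.1 ∩ Y.1) ∧ IsGLB {X, Y} Z) ∧
    (∀ X Y : M.Flats, X ⋖ Y → M.rk Y.1 = M.rk X.1 + 1) ∧
    (∃ N : ℕ, ∀ a b : M.Flats, a ≤ b →
      IsFinGeomLatticeAtMost ↥(Set.Icc a b) (fun z => M.rk z.1.1) N) ∧
    (∀ (A : Finset M.Flats) (jA : M.Flats),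
      (∀ a ∈ A, PosetAtom a) → IsLUB ↑A jA → M.rk jA.1 = A.card →
      ∀ x : M.Flats, M.rk x.1 < M.rk jA.1 →
        ∃ a ∈ A, ¬a ≤ x ∧ ∃ j : M.Flats, IsLUB {x, a} j) := by
  obtain ⟨d, hd⟩ := M.finDim
  exact ⟨FinSemimatroid.chainFinite, FinSemimatroid.exists_glb,
    fun X Y h => FinSemimatroid.covBy_rk h,
    ⟨2 ^ d, fun a b hab => FinSemimatroid.interval_geom d hd a b hab⟩,
    fun A jA hatoms hlub _ x hx => FinSemimatroid.g4 A jA hatoms hlub x hx⟩
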